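/- Let δ ∈ (0,1] and let m be an integer with m ≥ 3/δ. Let (E,V) be a partition datum on {1,…,3m} with δ(E,V) ≥ δ, and define N3 and G with parameter δ. Then |G| ≥ (δ/12) · m. -/
import Mathlib


open scoped Classical

/-- The density `δ(E,V)` of a partition datum on `{1,…,3m}`: `1/(m²(2m+1)⁵C(3m,2))` times
the sum over `(i₁,i₂) ∈ [m]²` and `(j₁,…,j₅) ∈ [2m+1]⁵` of
`|⋂_{k=1}^5 E_{i₁}[V_{j_k}] ∩ E_{i₂}[V_{j_k}]|`, where `E[W] = {e ∈ E : e ⊆ W}`. -/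
noncomputable def density (m : ℕ) (E : Fin m → Finset (Finset (Fin (3 * m))))
    (V : Fin (2 * m + 1) → Finset (Fin (3 * m))) : ℝ :=
  (∑ i : Fin m × Fin m, ∑ j : Fin 5 → Fin (2 * m + 1),
      ((Finset.univ.inf fun k : Fin 5 =>
        ((E i.1).filter fun e => e ⊆ V (j k)) ∩
        ((E i.2).filter fun e => e ⊆ V (j k))).card : ℝ)) /
    ((m : ℝ) ^ 2 * (2 * (m : ℝ) + 1) ^ 5 * ((3 * m).choose 2 : ℝ))

/-- `N3(i)`: the triples `(j₁,j₂,j₃)` of pairwise distinct indices with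
`|E_i[V_{j₁} ∩ V_{j₂} ∩ V_{j₃}]| ≥ (δ/3)·C(3m,2)`. -/
noncomputable def N3 (m : ℕ) (E : Fin m → Finset (Finset (Fin (3 * m))))
    (V : Fin (2 * m + 1) → Finset (Fin (3 * m))) (δ : ℝ) (i : Fin m) :
    Finset (Fin (2 * m + 1) × Fin (2 * m + 1) × Fin (2 * m + 1)) :=
  Finset.univ.filter fun j =>
    j.1 ≠ j.2.1 ∧ j.2.1 ≠ j.2.2 ∧ j.1 ≠ j.2.2 ∧
      (δ / 3) * ((3 * m).choose 2 : ℝ) ≤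
        (((E i).filter fun e => e ⊆ V j.1 ∩ V j.2.1 ∩ V j.2.2).card : ℝ)

/-- `G`: the set of `i ∈ [m]` with `|N3(i)| ≥ (δ/12)·(2m+1)³`. -/
noncomputable def Gset (m : ℕ) (E : Fin m → Finset (Finset (Fin (3 * m))))
    (V : Fin (2 * m + 1) → Finset (Fin (3 * m))) (δ : ℝ) : Finset (Fin m) :=
  Finset.univ.filter fun i => (δ / 12) * (2 * (m : ℝ) + 1) ^ 3 ≤ ((N3 m E V δ i).card : ℝ)

/-- Let `δ ∈ (0,1]` and `m ≥ 3/δ` an integer.  Let `(E,V)` be a partition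
datum on `{1,…,3m}` with `δ(E,V) ≥ δ`, and define `N3` and `G` with parameter `δ`.  Then
`|G| ≥ (δ/12)·m`. -/
def e5 (n : ℕ) : (Fin 5 → Fin n) ≃ (Fin n × Fin n × Fin n) × (Fin n × Fin n) where
  toFun j := ((j 0, j 1, j 2), (j 3, j 4))
  invFun p := ![p.1.1, p.1.2.1, p.1.2.2, p.2.1, p.2.2]
  left_inv j := by funext k; fin_cases k <;> rfl
  right_inv p := rfl

theorem stmt7 (δ : ℝ) (hδ0 : 0 < δ) (hδ1 : δ ≤ 1) (m : ℕ) (hm : 3 / δ ≤ (m : ℝ))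
    (E : Fin m → Finset (Finset (Fin (3 * m))))
    (hE2 : ∀ i, ∀ e ∈ E i, e.card = 2)
    (V : Fin (2 * m + 1) → Finset (Fin (3 * m)))
    (hdens : δ ≤ density m E V) :
    (δ / 12) * (m : ℝ) ≤ ((Gset m E V δ).card : ℝ) := by
  classical
  -- notation
  set M : ℝ := (m : ℝ) with hMdef
  set N : ℝ := 2 * M + 1 with hNdef
  set C : ℝ := (((3 * m).choose 2 : ℕ) : ℝ) with hCdef
  clear_value C N M
  have h3δ : (3 : ℝ) ≤ M * δ := (div_le_iff₀ hδ0).mp hm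
  have hM0 : (0 : ℝ) ≤ M := by rw [hMdef]; positivity
  have hM3 : (3 : ℝ) ≤ M := by nlinarith
  have hMpos : (0 : ℝ) < M := by linarith
  have hm3 : 3 ≤ m := by
    have h := hM3; rw [hMdef] at h; exact_mod_cast h
  have hNpos : (0 : ℝ) < N := by rw [hNdef]; linarith
  have hδN : (6 : ℝ) ≤ δ * N := by
    rw [hNdef]; nlinarith
  have hC : (0 : ℝ) < C := by
    have : 0 < (3 * m).choose 2 := Nat.choose_pos (by omega)
    rw [hCdef]; exact_mod_cast this
  -- every filtered edge-set has at most C elements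
  have hcard : ∀ (i : Fin m) (W : Finset (Fin (3 * m))),
      ((((E i).filter fun e => e ⊆ W).card : ℝ)) ≤ C := by
    intro i W
    have h1 : ((E i).filter fun e => e ⊆ W).card ≤ (3 * m).choose 2 := by
      calc ((E i).filter fun e => e ⊆ W).card ≤ (E i).card := Finset.card_filter_le _ _
        _ ≤ ((Finset.univ : Finset (Fin (3 * m))).powersetCard 2).card :=
            Finset.card_le_card (fun e he => by
              simp [Finset.mem_powersetCard, hE2 i e he])
        _ = (3 * m).choose 2 := by
            simp [Finset.card_powersetCard]
    rw [hCdef]; exact_mod_cast h1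
  -- the key quantity
  set g : Fin m → Fin (2 * m + 1) × Fin (2 * m + 1) × Fin (2 * m + 1) → ℝ :=
    fun i t => (((E i).filter fun e => e ⊆ V t.1 ∩ V t.2.1 ∩ V t.2.2).card : ℝ) with hgdef
  set T : Fin m → ℝ := fun i => ∑ t : Fin (2 * m + 1) × Fin (2 * m + 1) × Fin (2 * m + 1), g i t
    with hTdef
  clear_value T g
  -- clear the denominator in the density assumption
  have hden : δ * (M ^ 2 * N ^ 5 * C) ≤
      ∑ i : Fin m × Fin m, ∑ j : Fin 5 → Fin (2 * m + 1),
        ((Finset.univ.inf fun k : Fin 5 =>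
          ((E i.1).filter fun e => e ⊆ V (j k)) ∩
          ((E i.2).filter fun e => e ⊆ V (j k))).card : ℝ) := by
    rw [hNdef, hMdef, hCdef]
    have hMpos' : (0 : ℝ) < (m : ℝ) := by rw [hMdef] at hMpos; exact hMpos
    have hD : (0 : ℝ) < (m : ℝ) ^ 2 * (2 * (m : ℝ) + 1) ^ 5 * (((3 * m).choose 2 : ℕ) : ℝ) := by
      have hC' := hC
      rw [hCdef] at hC'
      exact mul_pos (mul_pos (pow_pos hMpos' 2) (by positivity)) hC'
    rw [density, le_div_iff₀ hD] at hdens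
    linarith
  -- per-term bound
  have hstep : ∀ (i : Fin m × Fin m) (j : Fin 5 → Fin (2 * m + 1)),
      ((Finset.univ.inf fun k : Fin 5 =>
        ((E i.1).filter fun e => e ⊆ V (j k)) ∩
        ((E i.2).filter fun e => e ⊆ V (j k))).card : ℝ) ≤ g i.1 (j 0, j 1, j 2) := by
    intro i j
    have hsub : (Finset.univ.inf fun k : Fin 5 =>
        ((E i.1).filter fun e => e ⊆ V (j k)) ∩
        ((E i.2).filter fun e => e ⊆ V (j k))) ⊆
        (E i.1).filter fun e => e ⊆ V (j 0) ∩ V (j 1) ∩ V (j 2) := by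
      intro e he
      have h0 : e ∈ ((E i.1).filter fun e => e ⊆ V (j 0)) ∩
          ((E i.2).filter fun e => e ⊆ V (j 0)) :=
        (Finset.le_iff_subset.mp (Finset.inf_le (Finset.mem_univ (0 : Fin 5)))) he
      have h1 : e ∈ ((E i.1).filter fun e => e ⊆ V (j 1)) ∩
          ((E i.2).filter fun e => e ⊆ V (j 1)) :=
        (Finset.le_iff_subset.mp (Finset.inf_le (Finset.mem_univ (1 : Fin 5)))) he
      have h2 : e ∈ ((E i.1).filter fun e => e ⊆ V (j 2)) ∩
          ((E i.2).filter fun e => e ⊆ V (j 2))  :=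
        (Finset.le_iff_subset.mp (Finset.inf_le (Finset.mem_univ (2 : Fin 5)))) he
      simp only [Finset.mem_inter, Finset.mem_filter] at h0 h1 h2
      simp only [Finset.mem_filter, Finset.subset_inter_iff]
      exact ⟨h0.1.1, ⟨h0.1.2, h1.1.2⟩, h2.1.2⟩
    simp only [hgdef]
    exact_mod_cast Finset.card_le_card hsub
  -- collapse the sum over 5-tuples
  have hsumj : ∀ i1 : Fin m,
      (∑ j : Fin 5 → Fin (2 * m + 1), g i1 (j 0, j 1, j 2)) = N ^ 2 * T i1 := by
    intro i1
    have he : (∑ j : Fin 5 → Fin (2 * m + 1), g i1 (j 0, j 1, j 2)) =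
        ∑ p : (Fin (2 * m + 1) × Fin (2 * m + 1) × Fin (2 * m + 1)) ×
          (Fin (2 * m + 1) × Fin (2 * m + 1)), g i1 p.1 :=
      Fintype.sum_equiv (e5 (2 * m + 1)) _ _ (fun j => rfl)
    rw [he, Fintype.sum_prod_type]
    simp only [Finset.sum_const, Finset.card_univ, Fintype.card_prod, Fintype.card_fin,
      nsmul_eq_mul, ← Finset.mul_sum]
    rw [hNdef, hMdef]
    simp only [hTdef]
    push_cast
    ring
  -- total bound
  have hS : δ * (M ^ 2 * N ^ 5 * C) ≤ M * (N ^ 2 * ∑ i : Fin m, T i) := by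
    calc δ * (M ^ 2 * N ^ 5 * C) ≤
        ∑ i : Fin m × Fin m, ∑ j : Fin 5 → Fin (2 * m + 1),
          ((Finset.univ.inf fun k : Fin 5 =>
            ((E i.1).filter fun e => e ⊆ V (j k)) ∩
            ((E i.2).filter fun e => e ⊆ V (j k))).card : ℝ) := hden
      _ ≤ ∑ i : Fin m × Fin m, ∑ j : Fin 5 → Fin (2 * m + 1), g i.1 (j 0, j 1, j 2) :=
          Finset.sum_le_sum (fun i _ => Finset.sum_le_sum (fun j _ => hstep i j))
      _ = ∑ i : Fin m × Fin m, N ^ 2 * T i.1 := by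
          exact Finset.sum_congr rfl (fun i _ => hsumj i.1)
      _ = M * (N ^ 2 * ∑ i : Fin m, T i) := by
          rw [Fintype.sum_prod_type]
          simp only [Finset.sum_const, Finset.card_univ, Fintype.card_fin, nsmul_eq_mul,
            ← Finset.mul_sum]
          rw [hMdef]; try ring
  have key : δ * M * N ^ 3 * C ≤ ∑ i : Fin m, T i := by
    have hMN2 : (0 : ℝ) < M * N ^ 2 := mul_pos hMpos (pow_pos hNpos 2)
    have heq : δ * M * N ^ 3 * C = (δ * (M ^ 2 * N ^ 5 * C)) / (M * N ^ 2) := by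
      rw [eq_div_iff (ne_of_gt hMN2)]; ring
    rw [heq, div_le_iff₀ hMN2]
    calc δ * (M ^ 2 * N ^ 5 * C) ≤ M * (N ^ 2 * ∑ i : Fin m, T i) := hS
      _ = (∑ i : Fin m, T i) * (M * N ^ 2) := by ring
  -- per-i bound on T i
  have hT : ∀ i : Fin m,
      T i ≤ (((N3 m E V δ i).card : ℝ) + 3 * N ^ 2) * C + N ^ 3 * ((δ / 3) * C) := by
    intro i
    set D : Finset (Fin (2 * m + 1) × Fin (2 * m + 1) × Fin (2 * m + 1)) :=
      Finset.univ.filter fun t => t.1 = t.2.1 ∨ t.2.1 = t.2.2 ∨ t.1 = t.2.2 with hDdef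
    set B : Finset (Fin (2 * m + 1) × Fin (2 * m + 1) × Fin (2 * m + 1)) :=
      N3 m E V δ i ∪ D with hBdef
    have hsplit : T i = (∑ t ∈ Finset.univ \ B, g i t) + ∑ t ∈ B, g i t := by
      simp only [hTdef]
      exact (Finset.sum_sdiff (Finset.subset_univ B)).symm
    -- bound on |D|
    have hD1 : (Finset.univ.filter fun t :
        Fin (2 * m + 1) × Fin (2 * m + 1) × Fin (2 * m + 1) => t.1 = t.2.1).card
        ≤ (2 * m + 1) * (2 * m + 1) := by
      have := Finset.card_le_card_of_injOn
        (fun t : Fin (2 * m + 1) × Fin (2 * m + 1) × Fin (2 * m + 1) => (t.2.1, t.2.2))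
        (fun t _ => Finset.mem_univ (t.2.1, t.2.2)) (s := Finset.univ.filter fun t :
          Fin (2 * m + 1) × Fin (2 * m + 1) × Fin (2 * m + 1) => t.1 = t.2.1)
        (by
          intro a ha b hb hab
          simp only [Finset.coe_filter, Set.mem_setOf_eq, Finset.mem_univ, true_and] at ha hb
          simp only [Prod.mk.injEq] at hab
          exact Prod.ext (by rw [ha, hb, hab.1]) (Prod.ext hab.1 hab.2))
      simpa [Finset.card_univ] using this
    have hD2 : (Finset.univ.filter fun t :
        Fin (2 * m + 1) × Fin (2 * m + 1) × Fin (2 * m + 1) => t.2.1 = t.2.2).card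
        ≤ (2 * m + 1) * (2 * m + 1) := by
      have := Finset.card_le_card_of_injOn
        (fun t : Fin (2 * m + 1) × Fin (2 * m + 1) × Fin (2 * m + 1) => (t.1, t.2.1))
        (fun t _ => Finset.mem_univ (t.1, t.2.1)) (s := Finset.univ.filter fun t :
          Fin (2 * m + 1) × Fin (2 * m + 1) × Fin (2 * m + 1) => t.2.1 = t.2.2)
        (by
          intro a ha b hb hab
          simp only [Finset.coe_filter, Set.mem_setOf_eq, Finset.mem_univ, true_and] at ha hb
          simp only [Prod.mk.injEq] at hab
          exact Prod.ext hab.1 (Prod.ext hab.2 (by rw [← ha, ← hb, hab.2])))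
      simpa [Finset.card_univ] using this
    have hD3 : (Finset.univ.filter fun t :
        Fin (2 * m + 1) × Fin (2 * m + 1) × Fin (2 * m + 1) => t.1 = t.2.2).card
        ≤ (2 * m + 1) * (2 * m + 1) := by
      have := Finset.card_le_card_of_injOn
        (fun t : Fin (2 * m + 1) × Fin (2 * m + 1) × Fin (2 * m + 1) => (t.1, t.2.1))
        (fun t _ => Finset.mem_univ (t.1, t.2.1)) (s := Finset.univ.filter fun t :
          Fin (2 * m + 1) × Fin (2 * m + 1) × Fin (2 * m + 1) => t.1 = t.2.2)
        (by
          intro a ha b hb hab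
          simp only [Finset.coe_filter, Set.mem_setOf_eq, Finset.mem_univ, true_and] at ha hb
          simp only [Prod.mk.injEq] at hab
          exact Prod.ext hab.1 (Prod.ext hab.2 (by rw [← ha, ← hb, hab.1])))
      simpa [Finset.card_univ] using this
    have hDcard : (D.card : ℝ) ≤ 3 * N ^ 2 := by
      have hsub : D ⊆ ((Finset.univ.filter fun t :
          Fin (2 * m + 1) × Fin (2 * m + 1) × Fin (2 * m + 1) => t.1 = t.2.1) ∪
          (Finset.univ.filter fun t => t.2.1 = t.2.2)) ∪
          (Finset.univ.filter fun t => t.1 = t.2.2) := by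
        intro t ht
        simp only [hDdef, Finset.mem_filter, Finset.mem_univ, true_and] at ht
        simp only [Finset.mem_union, Finset.mem_filter, Finset.mem_univ, true_and]
        tauto
      have h1 : D.card ≤ 3 * ((2 * m + 1) * (2 * m + 1)) := by
        calc D.card ≤ _ := Finset.card_le_card hsub
          _ ≤ _ := Finset.card_union_le _ _
          _ ≤ ((2 * m + 1) * (2 * m + 1) + (2 * m + 1) * (2 * m + 1)) +
              (2 * m + 1) * (2 * m + 1) := by
            gcongr
            calc _ ≤ _ := Finset.card_union_le _ _
              _ ≤ _ := add_le_add hD1 hD2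
          _ = 3 * ((2 * m + 1) * (2 * m + 1)) := by ring
      calc (D.card : ℝ) ≤ ((3 * ((2 * m + 1) * (2 * m + 1)) : ℕ) : ℝ) := by exact_mod_cast h1
        _ = 3 * N ^ 2 := by rw [hNdef, hMdef]; push_cast; ring
    -- bound on the B-part
    have hBpart : (∑ t ∈ B, g i t) ≤ (((N3 m E V δ i).card : ℝ) + 3 * N ^ 2) * C := by
      have h1 : (∑ t ∈ B, g i t) ≤ B.card • C :=
        Finset.sum_le_card_nsmul _ _ _ (fun t _ => by
          simp only [hgdef]; exact hcard i _)
      have h2 : (B.card : ℝ) ≤ ((N3 m E V δ i).card : ℝ) + 3 * N ^ 2 := by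
        have := Finset.card_union_le (N3 m E V δ i) D
        have h3 : (B.card : ℝ) ≤ ((N3 m E V δ i).card : ℝ) + (D.card : ℝ) := by
          exact_mod_cast this
        linarith
      rw [nsmul_eq_mul] at h1
      calc (∑ t ∈ B, g i t) ≤ (B.card : ℝ) * C := h1
        _ ≤ (((N3 m E V δ i).card : ℝ) + 3 * N ^ 2) * C :=
          mul_le_mul_of_nonneg_right h2 hC.le
    -- bound on the rest
    have hrest : (∑ t ∈ Finset.univ \ B, g i t) ≤ N ^ 3 * ((δ / 3) * C) := by
      have h1 : ∀ t ∈ Finset.univ \ B, g i t ≤ (δ / 3) * C := by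
        intro t ht
        rw [Finset.mem_sdiff, hBdef, Finset.mem_union] at ht
        push_neg at ht
        obtain ⟨-, hN3, hD⟩ := ht
        simp only [hDdef, Finset.mem_filter, Finset.mem_univ, true_and] at hD
        push_neg at hD
        simp only [N3, Finset.mem_filter, Finset.mem_univ, true_and, not_and, not_le] at hN3
        simp only [hgdef]
        rw [hCdef]
        exact le_of_lt (hN3 hD.1 hD.2.1 hD.2.2)
      have h2 : (∑ t ∈ Finset.univ \ B, g i t) ≤ (Finset.univ \ B).card • ((δ / 3) * C) :=
        Finset.sum_le_card_nsmul _ _ _ h1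
      rw [nsmul_eq_mul] at h2
      have h3 : ((Finset.univ \ B).card : ℝ) ≤ N ^ 3 := by
        have h4 : (Finset.univ \ B).card ≤ (2 * m + 1) * ((2 * m + 1) * (2 * m + 1)) := by
          calc (Finset.univ \ B).card ≤ (Finset.univ :
              Finset (Fin (2 * m + 1) × Fin (2 * m + 1) × Fin (2 * m + 1))).card :=
              Finset.card_le_card (Finset.sdiff_subset)
            _ = _ := by simp [Finset.card_univ]
        calc ((Finset.univ \ B).card : ℝ) ≤ (((2 * m + 1) * ((2 * m + 1) * (2 * m + 1)) : ℕ) : ℝ) := by exact_mod_cast h4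
          _ = N ^ 3 := by rw [hNdef, hMdef]; push_cast; ring
      have hpos : (0 : ℝ) ≤ (δ / 3) * C := by positivity
      calc (∑ t ∈ Finset.univ \ B, g i t) ≤ ((Finset.univ \ B).card : ℝ) * ((δ / 3) * C) := h2
        _ ≤ N ^ 3 * ((δ / 3) * C) := mul_le_mul_of_nonneg_right h3 hpos
    rw [hsplit]
    linarith
  -- sum the per-i bounds
  have hTsum : (∑ i : Fin m, T i) ≤
      (∑ i : Fin m, ((N3 m E V δ i).card : ℝ)) * C + M * (3 * N ^ 2) * C +
        M * (N ^ 3 * ((δ / 3) * C)) := by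
    calc (∑ i : Fin m, T i) ≤
        ∑ i : Fin m, ((((N3 m E V δ i).card : ℝ) + 3 * N ^ 2) * C + N ^ 3 * ((δ / 3) * C)) :=
          Finset.sum_le_sum (fun i _ => hT i)
      _ = _ := by
        simp only [Finset.sum_add_distrib, Finset.sum_const, Finset.card_univ, Fintype.card_fin,
          nsmul_eq_mul, add_mul, Finset.sum_mul]
        rw [hMdef]; ring
  -- so ∑ |N3 i| is large
  have hN3sum : δ / 6 * M * N ^ 3 ≤ ∑ i : Fin m, ((N3 m E V δ i).card : ℝ) := by
    have h1 : δ * M * N ^ 3 * C ≤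
        (∑ i : Fin m, ((N3 m E V δ i).card : ℝ)) * C + M * (3 * N ^ 2) * C +
          M * (N ^ 3 * ((δ / 3) * C)) := le_trans key hTsum
    have h2 : δ * M * N ^ 3 ≤
        (∑ i : Fin m, ((N3 m E V δ i).card : ℝ)) + M * (3 * N ^ 2) + M * (N ^ 3 * (δ / 3)) := by
      have h3 : (δ * M * N ^ 3) * C ≤
          ((∑ i : Fin m, ((N3 m E V δ i).card : ℝ)) + M * (3 * N ^ 2) +
            M * (N ^ 3 * (δ / 3))) * C := by
        calc (δ * M * N ^ 3) * C = δ * M * N ^ 3 * C := by ring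
          _ ≤ _ := h1
          _ = _ := by ring
      exact le_of_mul_le_mul_right h3 hC
    -- 3 M N² ≤ (δ/2) M N³ since 6 ≤ δ N
    have h4 : M * (3 * N ^ 2) ≤ δ / 2 * M * N ^ 3 := by
      nlinarith [mul_nonneg (mul_nonneg hMpos.le (sq_nonneg N)) (sub_nonneg.mpr hδN)]
    linarith
  -- split over G
  have hGsplit : (∑ i : Fin m, ((N3 m E V δ i).card : ℝ)) ≤
      ((Gset m E V δ).card : ℝ) * N ^ 3 + M * (δ / 12 * N ^ 3) := by
    have hsplit : (∑ i : Fin m, ((N3 m E V δ i).card : ℝ)) =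
        (∑ i ∈ Finset.univ \ Gset m E V δ, ((N3 m E V δ i).card : ℝ)) +
        ∑ i ∈ Gset m E V δ, ((N3 m E V δ i).card : ℝ) :=
      (Finset.sum_sdiff (Finset.subset_univ _)).symm
    have hbound : ∀ i : Fin m, ((N3 m E V δ i).card : ℝ) ≤ N ^ 3 := by
      intro i
      have h1 : (N3 m E V δ i).card ≤ (2 * m + 1) * ((2 * m + 1) * (2 * m + 1)) := by
        calc (N3 m E V δ i).card ≤ (Finset.univ :
            Finset (Fin (2 * m + 1) × Fin (2 * m + 1) × Fin (2 * m + 1))).card :=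
            Finset.card_le_univ _
          _ = _ := by simp [Finset.card_univ]
      calc ((N3 m E V δ i).card : ℝ) ≤
          (((2 * m + 1) * ((2 * m + 1) * (2 * m + 1)) : ℕ) : ℝ) := by exact_mod_cast h1
        _ = N ^ 3 := by rw [hNdef, hMdef]; push_cast; ring
    have hG : (∑ i ∈ Gset m E V δ, ((N3 m E V δ i).card : ℝ)) ≤
        ((Gset m E V δ).card : ℝ) * N ^ 3 := by
      have := Finset.sum_le_card_nsmul (Gset m E V δ)
        (fun i => ((N3 m E V δ i).card : ℝ)) (N ^ 3) (fun i _ => hbound i)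
      rwa [nsmul_eq_mul] at this
    have hnG : (∑ i ∈ Finset.univ \ Gset m E V δ, ((N3 m E V δ i).card : ℝ)) ≤
        M * (δ / 12 * N ^ 3) := by
      have h1 : ∀ i ∈ Finset.univ \ Gset m E V δ,
          ((N3 m E V δ i).card : ℝ) ≤ δ / 12 * N ^ 3 := by
        intro i hi
        rw [Finset.mem_sdiff] at hi
        have h2 := hi.2
        simp only [Gset, Finset.mem_filter, Finset.mem_univ, true_and, not_le] at h2
        rw [hNdef, hMdef]
        exact le_of_lt h2
      have h2 := Finset.sum_le_card_nsmul (Finset.univ \ Gset m E V δ)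
        (fun i => ((N3 m E V δ i).card : ℝ)) (δ / 12 * N ^ 3) h1
      rw [nsmul_eq_mul] at h2
      have h3 : ((Finset.univ \ Gset m E V δ).card : ℝ) ≤ M := by
        have h4 : (Finset.univ \ Gset m E V δ).card ≤ m := by
          calc (Finset.univ \ Gset m E V δ).card ≤ (Finset.univ : Finset (Fin m)).card :=
              Finset.card_le_card Finset.sdiff_subset
            _ = m := by simp
        rw [hMdef]; exact_mod_cast h4
      have hpos : (0 : ℝ) ≤ δ / 12 * N ^ 3 := by positivity
      calc (∑ i ∈ Finset.univ \ Gset m E V δ, ((N3 m E V δ i).card : ℝ)) ≤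
          ((Finset.univ \ Gset m E V δ).card : ℝ) * (δ / 12 * N ^ 3) := h2
        _ ≤ M * (δ / 12 * N ^ 3) := mul_le_mul_of_nonneg_right h3 hpos
    rw [hsplit]; linarith
  -- conclude
  have hfinal : (δ / 12 * M) * N ^ 3 ≤ ((Gset m E V δ).card : ℝ) * N ^ 3 := by
    linarith
  exact le_of_mul_le_mul_right hfinal (pow_pos hNpos 3)
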